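/- Let X_0 be a real-valued random variable such that 0 < G(r) < ∞ for every r ≥ 0. Then Var[U_r(X_0)] / E[(U_r(X_0))²] → 1 as r → ∞, and equivalently Var[U_r(X_0)] / (2G(r)) → 1 as r → ∞. -/

import Mathlib

open MeasureTheory ProbabilityTheory Filter Asymptotics
open scoped ENNReal Topology NNReal

noncomputable section

/-- The shrinking operator `U_r : ℝ → ℝ` (for `r ≥ 0`):
`U_r(x) = x - r` if `x > r`, `0` if `|x| ≤ r`, and `x + r` if `x < -r`. -/
def shrink (r x : ℝ) : ℝ := if r < x then x - r else if x < -r then x + r else 0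

variable {Ω : Type*}

/-- `G(r) := ∫₀^∞ t · P(|X| > t + r) dt`. -/
def Gfun [MeasurableSpace Ω] (P : Measure Ω) (X : Ω → ℝ) (r : ℝ) : ℝ≥0∞ :=
  ∫⁻ t in Set.Ioi (0 : ℝ), ENNReal.ofReal t * P {ω | t + r < |X ω|}

/-- Strict stationarity of a two-sided sequence of random variables: for all `j, l ∈ ℤ`
and `m ≥ 0`, the random vectors `(X_j, …, X_{j+m})` and `(X_l, …, X_{l+m})` have the
same distribution. -/
def StrictlyStationary [MeasurableSpace Ω] (P : Measure Ω) (X : ℤ → Ω → ℝ) : Prop :=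
  ∀ (j l : ℤ) (m : ℕ),
    Measure.map (fun ω => fun i : Fin (m + 1) => X (j + i) ω) P =
    Measure.map (fun ω => fun i : Fin (m + 1) => X (l + i) ω) P

/-- The correlation coefficient of two real random variables. -/
def corr [MeasurableSpace Ω] (P : Measure Ω) (f g : Ω → ℝ) : ℝ :=
  (∫ ω, (f ω - ∫ x, f x ∂P) * (g ω - ∫ x, g x ∂P) ∂P) /
    (Real.sqrt (∫ ω, (f ω - ∫ x, f x ∂P) ^ 2 ∂P) *
      Real.sqrt (∫ ω, (g ω - ∫ x, g x ∂P) ^ 2 ∂P))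

/-- The maximal correlation coefficient `ρ(𝒜, ℬ)`: the supremum of `|Corr(f,g)|` over
square-integrable `f` measurable w.r.t. `𝒜` and `g` measurable w.r.t. `ℬ`. -/
def maxCorr [mΩ : MeasurableSpace Ω] (P : Measure Ω) (A B : MeasurableSpace Ω) : ℝ :=
  sSup { c | ∃ f g : Ω → ℝ, Measurable[A] f ∧ Measurable[B] g ∧
    MemLp (m0 := mΩ) f 2 P ∧ MemLp (m0 := mΩ) g 2 P ∧ c = |@corr Ω mΩ P f g| }

/-- The strong mixing coefficient `α(𝒜, ℬ)`. -/
def alphaMix [MeasurableSpace Ω] (P : Measure Ω) (A B : MeasurableSpace Ω) : ℝ :=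
  sSup { c | ∃ s t : Set Ω, MeasurableSet[A] s ∧ MeasurableSet[B] t ∧
    c = |(P (s ∩ t)).toReal - (P s).toReal * (P t).toReal| }

/-- The σ-field generated by the random variables `X k`, `k ∈ S`. -/
def genFrom [MeasurableSpace Ω] (X : ℤ → Ω → ℝ) (S : Set ℤ) : MeasurableSpace Ω :=
  ⨆ k ∈ S, MeasurableSpace.comap (X k) inferInstance

/-- `ρ(n) = ρ(σ(X_k, k ≤ 0), σ(X_k, k ≥ n))`. -/
def rhoCoef [MeasurableSpace Ω] (P : Measure Ω) (X : ℤ → Ω → ℝ) (n : ℕ) : ℝ :=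
  maxCorr P (genFrom X {k | k ≤ 0}) (genFrom X {k | (n : ℤ) ≤ k})

/-- `α(n) = α(σ(X_k, k ≤ 0), σ(X_k, k ≥ n))`. -/
def alphaCoef [MeasurableSpace Ω] (P : Measure Ω) (X : ℤ → Ω → ℝ) (n : ℕ) : ℝ :=
  alphaMix P (genFrom X {k | k ≤ 0}) (genFrom X {k | (n : ℤ) ≤ k})

/-- `ρ*(n)`: the supremum of `ρ(σ(X_k, k ∈ S), σ(X_k, k ∈ T))` over all pairs of nonempty
disjoint `S, T ⊆ ℤ` with `dist(S,T) ≥ n`. -/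
def rhoStarCoef [MeasurableSpace Ω] (P : Measure Ω) (X : ℤ → Ω → ℝ) (n : ℕ) : ℝ :=
  sSup { c | ∃ S T : Set ℤ, S.Nonempty ∧ T.Nonempty ∧ Disjoint S T ∧
    (∀ s ∈ S, ∀ t ∈ T, (n : ℤ) ≤ |s - t|) ∧
    c = maxCorr P (genFrom X S) (genFrom X T) }

/-- `Y_{k,r} := U_r(X_k) - E[U_r(X_0)]`. -/
def Ymix [MeasurableSpace Ω] (P : Measure Ω) (X : ℤ → Ω → ℝ) (k : ℤ) (r : ℝ) (ω : Ω) : ℝ :=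
  shrink r (X k ω) - ∫ ω', shrink r (X 0 ω') ∂P


private lemma measurable_shrink (r : ℝ) : Measurable (shrink r) := by
  unfold shrink
  exact Measurable.ite (measurableSet_lt measurable_const measurable_id)
    (measurable_id.sub_const r)
    (Measurable.ite (measurableSet_lt measurable_id measurable_const)
      (measurable_id.add_const r) measurable_const)

private lemma shrink_sq {r : ℝ} (hr : 0 ≤ r) (x : ℝ) :
    shrink r x ^ 2 = max (|x| - r) 0 ^ 2 := by
  unfold shrink
  rcases lt_or_ge r x with h | h
  · rw [if_pos h, abs_of_pos (lt_of_le_of_lt hr h), max_eq_left (by linarith)]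
  · rw [if_neg (not_lt.2 h)]
    rcases lt_or_ge x (-r) with h2 | h2
    · rw [if_pos h2, abs_of_neg (by linarith), max_eq_left (by linarith)]
      ring
    · rw [if_neg (not_lt.2 h2), max_eq_right (by cases abs_cases x with
        | inl hc => rw [hc.1]; linarith
        | inr hc => rw [hc.1]; linarith)]

private lemma shrink_eq_zero {r x : ℝ} (h : |x| ≤ r) : shrink r x = 0 := by
  unfold shrink
  rcases abs_le.1 h with ⟨h1, h2⟩
  rw [if_neg (not_lt.2 h2), if_neg (not_lt.2 h1)]

private lemma lintegral_shrink_sq [MeasurableSpace Ω] (P : Measure Ω) (X₀ : Ω → ℝ)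
    (hmeas : Measurable X₀) {r : ℝ} (hr : 0 ≤ r) :
    ∫⁻ ω, ENNReal.ofReal (shrink r (X₀ ω) ^ 2) ∂P = 2 * Gfun P X₀ r := by
  have hm : ∀ ω, 0 ≤ max (|X₀ ω| - r) 0 := fun ω => le_max_right _ _
  have mmble : AEMeasurable (fun ω => max (|X₀ ω| - r) 0) P :=
    ((hmeas.abs.sub_const r).max measurable_const).aemeasurable
  have g_intble : ∀ t > (0:ℝ), IntervalIntegrable (fun s => 2 * s) volume 0 t :=
    fun _ _ => (continuous_const.mul continuous_id).intervalIntegrable 0 _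
  have g_nn : ∀ᵐ t ∂(volume.restrict (Set.Ioi (0:ℝ))), 0 ≤ 2 * t := by
    filter_upwards [self_mem_ae_restrict measurableSet_Ioi] with t ht
    have : (0:ℝ) < t := ht
    linarith
  have key := lintegral_comp_eq_lintegral_meas_lt_mul P (Eventually.of_forall hm) mmble
    g_intble g_nn
  have lhs_eq : ∀ ω, ENNReal.ofReal (∫ t in (0:ℝ)..(max (|X₀ ω| - r) 0), 2 * t) =
      ENNReal.ofReal (shrink r (X₀ ω) ^ 2) := by
    intro ω
    rw [intervalIntegral.integral_const_mul, integral_id, shrink_sq hr]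
    congr 1; ring
  simp_rw [lhs_eq] at key
  rw [key, Gfun]
  rw [← lintegral_const_mul' 2 _ (by simp)]
  refine setLIntegral_congr_fun measurableSet_Ioi (fun t ht => ?_)
  have hset : {a | t < max (|X₀ a| - r) 0} = {ω | t + r < |X₀ ω|} := by
    ext a
    simp only [Set.mem_setOf_eq, lt_max_iff]
    constructor
    · rintro (h | h)
      · linarith
      · exact absurd h (not_lt.2 (le_of_lt ht))
    · intro h; left; linarith
  rw [hset, ENNReal.ofReal_mul (by norm_num : (0:ℝ) ≤ 2)]
  have h2 : ENNReal.ofReal (2:ℝ) = 2 := by norm_num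
  rw [h2]; ring

private lemma cs_lemma [MeasurableSpace Ω] (P : Measure Ω) [IsProbabilityMeasure P]
    (g : Ω → ℝ) (s : Set Ω) (hs : MeasurableSet s) (hg : MemLp g 2 P)
    (hzero : ∀ ω ∉ s, g ω = 0) :
    (∫ ω, g ω ∂P) ^ 2 ≤ (∫ ω, g ω ^ 2 ∂P) * (P s).toReal := by
  set ind : Ω → ℝ := s.indicator (fun _ => 1) with hind
  have hq : Real.HolderConjugate 2 2 := (Real.holderConjugate_iff_eq_conjExponent one_lt_two).2 (by norm_num)
  have hgabs : MemLp (fun ω => |g ω|) (ENNReal.ofReal 2) P := by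
    have h2 : ENNReal.ofReal (2:ℝ) = 2 := by norm_num
    rw [h2]
    simpa [Real.norm_eq_abs] using hg.norm
  have hind2 : MemLp ind (ENNReal.ofReal 2) P := by
    have h2 : ENNReal.ofReal (2:ℝ) = 2 := by norm_num
    rw [h2]
    exact (memLp_const (1:ℝ)).indicator hs
  have hCS := integral_mul_le_Lp_mul_Lq_of_nonneg hq
    (Eventually.of_forall fun ω => abs_nonneg (g ω))
    (Eventually.of_forall fun ω => Set.indicator_nonneg (fun _ _ => zero_le_one) ω)
    hgabs hind2
  have hprod : ∀ ω, |g ω| * ind ω = |g ω| := by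
    intro ω
    by_cases hω : ω ∈ s
    · simp [hind, hω]
    · simp [hind, hω, hzero ω hω]
  have habs2 : ∀ ω, |g ω| ^ (2:ℝ) = g ω ^ 2 := by
    intro ω
    rw [show ((2:ℝ)) = ((2:ℕ):ℝ) by norm_num, Real.rpow_natCast, sq_abs]
  have hindsq : ∀ ω, ind ω ^ (2:ℝ) = ind ω := by
    intro ω
    by_cases hω : ω ∈ s <;> simp [hind, hω]
  rw [← hind] at hCS
  simp_rw [hprod, habs2, hindsq] at hCS
  have hindint : ∫ a, ind a ∂P = (P s).toReal := by
    simpa [hind, Measure.real_def, Pi.one_def] using integral_indicator_one (μ := P) hs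
  rw [hindint] at hCS
  have habs : |∫ ω, g ω ∂P| ≤ ∫ ω, |g ω| ∂P := by
    simpa [Real.norm_eq_abs] using norm_integral_le_integral_norm (μ := P) g
  have hsqle : (∫ ω, g ω ∂P) ^ 2 ≤ (∫ ω, |g ω| ∂P) ^ 2 := by
    rw [← sq_abs (∫ ω, g ω ∂P)]
    exact pow_le_pow_left₀ (abs_nonneg _) habs 2
  have hrpow : ∀ C : ℝ, 0 ≤ C → (C ^ ((1:ℝ)/2)) ^ 2 = C := by
    intro C hC
    rw [← Real.rpow_natCast (C ^ ((1:ℝ)/2)) 2, ← Real.rpow_mul hC]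
    norm_num
  have hA : 0 ≤ ∫ ω, g ω ^ 2 ∂P := integral_nonneg fun ω => sq_nonneg _
  have hB : 0 ≤ (P s).toReal := ENNReal.toReal_nonneg
  calc (∫ ω, g ω ∂P) ^ 2 ≤ (∫ ω, |g ω| ∂P) ^ 2 := hsqle
    _ ≤ ((∫ ω, g ω ^ 2 ∂P) ^ ((1:ℝ)/2) * (P s).toReal ^ ((1:ℝ)/2)) ^ 2 := by
        apply pow_le_pow_left₀ (integral_nonneg fun ω => abs_nonneg _) hCS
    _ = (∫ ω, g ω ^ 2 ∂P) * (P s).toReal := by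
        rw [mul_pow, hrpow _ hA, hrpow _ hB]

private lemma tail_tendsto [MeasurableSpace Ω] (P : Measure Ω) [IsProbabilityMeasure P]
    (X₀ : Ω → ℝ) (hmeas : Measurable X₀) :
    Tendsto (fun r : ℝ => (P {ω | r < |X₀ ω|}).toReal) atTop (𝓝 0) := by
  have h0 : Tendsto (fun r : ℝ => P {ω | r < |X₀ ω|}) atTop
      (𝓝 (P (⋂ r : ℝ, {ω | r < |X₀ ω|}))) :=
    tendsto_measure_iInter_atTop
      (fun r => (measurableSet_lt measurable_const hmeas.abs).nullMeasurableSet)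
      (fun a b hab ω hω => lt_of_le_of_lt hab hω)
      ⟨0, measure_ne_top P _⟩
  have hempty : (⋂ r : ℝ, {ω | r < |X₀ ω|}) = ∅ := by
    ext ω
    simp only [Set.mem_iInter, Set.mem_setOf_eq, Set.mem_empty_iff_false, iff_false, not_forall,
      not_lt]
    exact ⟨|X₀ ω|, le_refl _⟩
  rw [hempty, measure_empty] at h0
  have := (ENNReal.tendsto_toReal (by simp : (0:ℝ≥0∞) ≠ ∞)).comp h0
  exact this

/-- **Lemma 4.1 (eq. (4.5)).** `Var[U_r(X_0)] / E[(U_r(X_0))²] → 1` and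
`Var[U_r(X_0)] / (2G(r)) → 1` as `r → ∞`. -/
theorem variance_ratio_tendsto_one
    [MeasurableSpace Ω] (P : Measure Ω) [IsProbabilityMeasure P]
    (X₀ : Ω → ℝ) (hmeas : Measurable X₀)
    (hG : ∀ r : ℝ, 0 ≤ r → 0 < Gfun P X₀ r ∧ Gfun P X₀ r < ∞) :
    Tendsto (fun r : ℝ =>
        variance (fun ω => shrink r (X₀ ω)) P / ∫ ω, shrink r (X₀ ω) ^ 2 ∂P)
      atTop (𝓝 1) ∧
    Tendsto (fun r : ℝ =>
        variance (fun ω => shrink r (X₀ ω)) P / (2 * (Gfun P X₀ r).toReal))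
      atTop (𝓝 1) := by
  have hmg : ∀ r : ℝ, Measurable (fun ω => shrink r (X₀ ω)) :=
    fun r => (measurable_shrink r).comp hmeas
  set M : ℝ → ℝ := fun r => ∫ ω, shrink r (X₀ ω) ∂P with hM
  set E2 : ℝ → ℝ := fun r => ∫ ω, shrink r (X₀ ω) ^ 2 ∂P with hE2
  have hlint : ∀ r : ℝ, 0 ≤ r →
      ∫⁻ ω, ENNReal.ofReal (shrink r (X₀ ω) ^ 2) ∂P = 2 * Gfun P X₀ r :=
    fun r hr => lintegral_shrink_sq P X₀ hmeas hr
  have hint2 : ∀ r : ℝ, 0 ≤ r → Integrable (fun ω => shrink r (X₀ ω) ^ 2) P := by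
    intro r hr
    refine ⟨((hmg r).pow_const 2).aestronglyMeasurable, ?_⟩
    rw [hasFiniteIntegral_iff_ofReal (Eventually.of_forall fun ω => sq_nonneg _)]
    rw [hlint r hr]
    exact ENNReal.mul_lt_top (by simp) (hG r hr).2
  have hmem : ∀ r : ℝ, 0 ≤ r → MemLp (fun ω => shrink r (X₀ ω)) 2 P := fun r hr =>
    (memLp_two_iff_integrable_sq ((hmg r).aestronglyMeasurable)).2 (hint2 r hr)
  have hE2eq : ∀ r : ℝ, 0 ≤ r → E2 r = 2 * (Gfun P X₀ r).toReal := by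
    intro r hr
    show (∫ ω, shrink r (X₀ ω) ^ 2 ∂P) = 2 * (Gfun P X₀ r).toReal
    rw [integral_eq_lintegral_of_nonneg_ae (Eventually.of_forall fun ω => sq_nonneg _)
      ((hmg r).pow_const 2).aestronglyMeasurable, hlint r hr, ENNReal.toReal_mul]
    norm_num
  have hE2pos : ∀ r : ℝ, 0 ≤ r → 0 < E2 r := by
    intro r hr
    rw [hE2eq r hr]
    have h1 := hG r hr
    have := ENNReal.toReal_pos h1.1.ne' h1.2.ne
    linarith
  have hCSr : ∀ r : ℝ, 0 ≤ r → M r ^ 2 ≤ E2 r * (P {ω | r < |X₀ ω|}).toReal := by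
    intro r hr
    exact cs_lemma P _ _ (measurableSet_lt measurable_const hmeas.abs) (hmem r hr)
      (fun ω hω => shrink_eq_zero (not_lt.1 hω))
  have hqt : Tendsto (fun r => M r ^ 2 / E2 r) atTop (𝓝 0) := by
    refine squeeze_zero' (Eventually.of_forall fun r =>
        div_nonneg (sq_nonneg _) (integral_nonneg fun ω => sq_nonneg _)) ?_
      (tail_tendsto P X₀ hmeas)
    filter_upwards [eventually_ge_atTop (0:ℝ)] with r hr
    rw [div_le_iff₀ (hE2pos r hr)]
    linarith [hCSr r hr]
  have hvar : ∀ r : ℝ, 0 ≤ r →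
      variance (fun ω => shrink r (X₀ ω)) P = E2 r - M r ^ 2 := by
    intro r hr
    rw [variance_eq_sub (hmem r hr)]
    congr 1
  have hfirst : Tendsto (fun r => variance (fun ω => shrink r (X₀ ω)) P / E2 r)
      atTop (𝓝 1) := by
    have h1 : Tendsto (fun r => 1 - M r ^ 2 / E2 r) atTop (𝓝 1) := by
      simpa using tendsto_const_nhds.sub hqt
    refine h1.congr' ?_
    filter_upwards [eventually_ge_atTop (0:ℝ)] with r hr
    rw [hvar r hr, sub_div, div_self (hE2pos r hr).ne']
  refine ⟨hfirst, hfirst.congr' ?_⟩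
  filter_upwards [eventually_ge_atTop (0:ℝ)] with r hr
  rw [← hE2eq r hr]
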